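/- Let b > 0, let m : [0, ∞) → [0, ∞) be increasing with m(t) = 0 for t ∈ [0, b) and m(t) ≤ C·t for all t ≥ 0 (for some constant C ≥ 0). Let Q : [0, ∞) → [0, ∞) be continuous with Q(t) ≤ C₃·t for all t ≥ b (some constant C₃ ≥ 0). Then for every N ≥ 0 there exists C₂ ≥ 0 such that for all b ≤ r < R < ∞: ∫_r^R Q(t)/t² dm(t) ≤ C₂ · ∫_r^R t^N · sup_{s ≥ t} Q(s)/s^{2+N} dt + C₂. -/

import Mathlib

open Real Set MeasureTheory intervalIntegral

/-- Lemma 3 of the paper: if the increasing function `m` vanishes on `[0, b)` and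
satisfies `m(t) ≤ C t`, and the continuous `Q ≥ 0` satisfies `Q(t) ≤ C₃ t` for
`t ≥ b`, then for every `N ≥ 0` there is `C₂ ≥ 0` with
`∫_{(r,R]} Q(t)/t² dm(t) ≤ C₂ ∫_r^R t^N sup_{s ≥ t} Q(s)/s^{2+N} dt + C₂`
for all `b ≤ r < R`. -/
theorem stmt4 (b : ℝ) (hb : 0 < b) (m : StieltjesFunction ℝ)
    (hm0 : ∀ t : ℝ, t < b → m t = 0) (hmpos : ∀ t : ℝ, 0 ≤ m t)
    (C : ℝ) (hC : 0 ≤ C) (hmC : ∀ t : ℝ, 0 ≤ t → m t ≤ C * t)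
    (Q : ℝ → ℝ) (hQcont : Continuous Q) (hQpos : ∀ t : ℝ, 0 ≤ Q t)
    (C₃ : ℝ) (hC₃ : 0 ≤ C₃) (hQC₃ : ∀ t : ℝ, b ≤ t → Q t ≤ C₃ * t)
    (N : ℝ) (hN : 0 ≤ N) :
    ∃ C₂ : ℝ, 0 ≤ C₂ ∧ ∀ r R : ℝ, b ≤ r → r < R →
      (∫ t in Set.Ioc r R, Q t / t ^ 2 ∂m.measure) ≤
        C₂ * (∫ t in r..R, t ^ N * ⨆ s : {s : ℝ // t ≤ s}, Q s.1 / (s.1 : ℝ) ^ ((2:ℝ) + N))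
          + C₂ := by
  have hne : ∀ t : ℝ, Nonempty {s : ℝ // t ≤ s} := fun t => ⟨⟨t, le_rfl⟩⟩
  set S : ℝ → ℝ := fun t => ⨆ s : {s : ℝ // t ≤ s}, Q s.1 / (s.1 : ℝ) ^ ((2:ℝ) + N)
    with hSdef
  -- each term of the sup is bounded
  have hterm_le : ∀ t : ℝ, b ≤ t → ∀ s : ℝ, t ≤ s →
      Q s / s ^ ((2:ℝ) + N) ≤ C₃ * t ^ (-(1+N)) := by
    intro t ht s hs
    have ht0 : 0 < t := lt_of_lt_of_le hb ht
    have hs0 : 0 < s := lt_of_lt_of_le ht0 hs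
    have hsb : b ≤ s := le_trans ht hs
    have hpow : 0 < s ^ ((2:ℝ) + N) := Real.rpow_pos_of_pos hs0 _
    have h1 : Q s / s ^ ((2:ℝ) + N) ≤ C₃ * s / s ^ ((2:ℝ) + N) := by
      gcongr
      exact hQC₃ s hsb
    have h2 : C₃ * s / s ^ ((2:ℝ) + N) = C₃ * s ^ (-(1+N)) := by
      have : s / s ^ ((2:ℝ) + N) = s ^ (-(1+N)) := by
        rw [show (-(1+N) : ℝ) = 1 - ((2:ℝ) + N) by ring, Real.rpow_sub hs0, Real.rpow_one]
      rw [mul_div_assoc, this]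
    have h3 : s ^ (-(1+N)) ≤ t ^ (-(1+N)) :=
      Real.rpow_le_rpow_of_nonpos ht0 hs (by linarith)
    calc Q s / s ^ ((2:ℝ) + N) ≤ C₃ * s ^ (-(1+N)) := by rw [← h2]; exact h1
      _ ≤ C₃ * t ^ (-(1+N)) := mul_le_mul_of_nonneg_left h3 hC₃
  have hBdd : ∀ t : ℝ, b ≤ t →
      BddAbove (Set.range fun s : {s : ℝ // t ≤ s} => Q s.1 / (s.1 : ℝ) ^ ((2:ℝ) + N)) := by
    intro t ht
    exact ⟨C₃ * t ^ (-(1+N)), by rintro x ⟨s, rfl⟩; exact hterm_le t ht s.1 s.2⟩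
  have hS_le : ∀ t : ℝ, b ≤ t → S t ≤ C₃ * t ^ (-(1+N)) := by
    intro t ht
    haveI := hne t
    exact ciSup_le fun s => hterm_le t ht s.1 s.2
  have hS_nonneg : ∀ t : ℝ, b ≤ t → 0 ≤ S t := by
    intro t ht
    refine Real.iSup_nonneg fun s => div_nonneg (hQpos _) ?_
    exact (Real.rpow_pos_of_pos (lt_of_lt_of_le hb (le_trans ht s.2)) _).le
  have hS_anti : ∀ t₁ t₂ : ℝ, b ≤ t₁ → t₁ ≤ t₂ → S t₂ ≤ S t₁ := by
    intro t₁ t₂ hb1 h12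
    haveI := hne t₂
    exact ciSup_le fun s => le_ciSup_of_le (hBdd t₁ hb1) ⟨s.1, le_trans h12 s.2⟩ le_rfl
  have hkey : ∀ t : ℝ, b ≤ t → Q t / t ^ 2 ≤ t ^ N * S t := by
    intro t ht
    have ht0 : 0 < t := lt_of_lt_of_le hb ht
    have h1 : Q t / t ^ ((2:ℝ) + N) ≤ S t := le_ciSup (hBdd t ht) ⟨t, le_rfl⟩
    have h2 : t ^ ((2:ℝ) + N) = t ^ 2 * t ^ N := by
      rw [Real.rpow_add ht0]
      norm_num [show ((2:ℝ) = ((2:ℕ):ℝ)) by norm_num, Real.rpow_natCast]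
    have hQt : Q t / t ^ 2 = t ^ N * (Q t / t ^ ((2:ℝ) + N)) := by
      rw [h2]
      have hN0 : (t:ℝ) ^ N ≠ 0 := (Real.rpow_pos_of_pos ht0 N).ne'
      have h20 : (t:ℝ) ^ 2 ≠ 0 := pow_ne_zero 2 ht0.ne'
      field_simp
    rw [hQt]
    exact mul_le_mul_of_nonneg_left h1 (Real.rpow_nonneg ht0.le N)
  set K := (2:ℝ) ^ (N+1) with hKdef
  have hK0 : 0 < K := Real.rpow_pos_of_pos two_pos _
  have hK2 : K = 2 ^ N * 2 := Real.rpow_add_one two_ne_zero N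
  refine ⟨2*K*C*(C₃+1), by positivity, ?_⟩
  intro r R hbr hrR
  have hr0 : 0 < r := lt_of_lt_of_le hb hbr
  -- measurable version of S
  set S' : ℝ → ℝ := fun t => S (max t b) with hS'def
  have hS'anti : Antitone S' := fun t₁ t₂ h =>
    hS_anti _ _ (le_max_right _ _) (max_le_max h le_rfl)
  have hS'meas : Measurable S' := hS'anti.measurable
  have hS'eq : ∀ u : ℝ, b ≤ u → S' u = S u := by
    intro u hu
    rw [hS'def]
    simp [max_eq_left hu]
  set G : ℝ → ENNReal := fun u => ENNReal.ofReal (u ^ N * S' u) with hGdef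
  have hGmeas : Measurable G := by
    apply Measurable.ennreal_ofReal
    exact ((by fun_prop : Measurable fun u : ℝ => u ^ N)).mul hS'meas
  have hIocb : Ioc r R ⊆ Ici b := fun x hx => le_trans hbr hx.1.le
  -- integrability of u^N * S u on (r, R]
  have hI_int : IntegrableOn (fun u => u ^ N * S u) (Ioc r R) volume := by
    have h1 : IntegrableOn (fun u => u ^ N * S' u) (Ioc r R) volume := by
      apply Measure.integrableOn_of_bounded (M := (|r| + |R|) ^ N * (C₃ * b ^ (-(1+N))))
      · exact (measure_Ioc_lt_top).ne
      · exact (((by fun_prop : Measurable fun u : ℝ => u ^ N)).mul hS'meas).aestronglyMeasurable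
      · filter_upwards [ae_restrict_mem measurableSet_Ioc] with u hu
        have hub : b ≤ u := hbr.trans hu.1.le
        have hu0 : 0 < u := lt_of_lt_of_le hb hub
        rw [hS'eq u hub, Real.norm_eq_abs,
          abs_of_nonneg (mul_nonneg (Real.rpow_nonneg hu0.le N) (hS_nonneg u hub))]
        have hb1 : u ^ N ≤ (|r| + |R|) ^ N := by
          apply Real.rpow_le_rpow hu0.le ?_ hN
          have := abs_nonneg r
          calc u ≤ R := hu.2
            _ ≤ |R| := le_abs_self R
            _ ≤ |r| + |R| := by linarith
        have hb2 : S u ≤ C₃ * b ^ (-(1+N)) := by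
          refine (hS_le u hub).trans ?_
          exact mul_le_mul_of_nonneg_left
            (Real.rpow_le_rpow_of_nonpos hb hub (by linarith)) hC₃
        exact mul_le_mul hb1 hb2 (hS_nonneg u hub) (Real.rpow_nonneg (by positivity) N)
    exact h1.congr_fun (fun u hu => by dsimp only; rw [hS'eq u (hIocb hu)]) measurableSet_Ioc
  set I := ∫ u in Ioc r R, u ^ N * S u with hIdef
  have hI0 : 0 ≤ I := by
    apply setIntegral_nonneg measurableSet_Ioc
    intro u hu
    exact mul_nonneg (Real.rpow_nonneg (lt_of_lt_of_le hb (hIocb hu)).le N)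
      (hS_nonneg u (hIocb hu))
  have hGI : ∫⁻ u in Ioc r R, G u ∂volume = ENNReal.ofReal I := by
    rw [hIdef, ofReal_integral_eq_lintegral_ofReal hI_int
      ((ae_restrict_iff' measurableSet_Ioc).mpr (Filter.Eventually.of_forall fun u hu =>
        mul_nonneg (Real.rpow_nonneg (lt_of_lt_of_le hb (hIocb hu)).le N)
          (hS_nonneg u (hIocb hu))))]
    apply setLIntegral_congr_fun measurableSet_Ioc
    exact fun u hu => by rw [hGdef]; dsimp only; rw [hS'eq u (hIocb hu)]
  -- LHS as a lower Lebesgue integral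
  have hLHS : (∫ t in Ioc r R, Q t / t ^ 2 ∂m.measure)
      = (∫⁻ t in Ioc r R, ENNReal.ofReal (Q t / t ^ 2) ∂m.measure).toReal := by
    apply integral_eq_lintegral_of_nonneg_ae
    · exact Filter.Eventually.of_forall fun t => div_nonneg (hQpos t) (sq_nonneg t)
    · exact (hQcont.measurable.div (measurable_id.pow_const 2)).aestronglyMeasurable
  have hmono : ∫⁻ t in Ioc r R, ENNReal.ofReal (Q t / t ^ 2) ∂m.measure
      ≤ ∫⁻ t in Ioc r R, G t ∂m.measure := by
    apply setLIntegral_mono_ae (hGmeas.aemeasurable)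
    refine Filter.Eventually.of_forall fun t ht => ?_
    have htb : b ≤ t := hbr.trans ht.1.le
    rw [hGdef]; dsimp only; rw [hS'eq t htb]
    exact ENNReal.ofReal_le_ofReal (hkey t htb)
  set R' := min (2*r) R with hR'def
  have hrR' : r ≤ R' := le_min (by linarith) hrR.le
  have hR'R : R' ≤ R := min_le_right _ _
  have hsplit : ∫⁻ t in Ioc r R, G t ∂m.measure
      = (∫⁻ t in Ioc r R', G t ∂m.measure) + ∫⁻ t in Ioc R' R, G t ∂m.measure := by
    rw [← lintegral_union measurableSet_Ioc (Set.Ioc_disjoint_Ioc_of_le le_rfl),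
      Set.Ioc_union_Ioc_eq_Ioc hrR' hR'R]
  -- term 1
  have hterm1 : ∫⁻ t in Ioc r R', G t ∂m.measure ≤ ENNReal.ofReal (K * C * C₃) := by
    have hb1 : ∀ t ∈ Ioc r R', G t ≤ ENNReal.ofReal ((2*r) ^ N * S r) := by
      intro t ht
      have htb : b ≤ t := hbr.trans ht.1.le
      rw [hGdef]; dsimp only; rw [hS'eq t htb]
      apply ENNReal.ofReal_le_ofReal
      have h1 : t ^ N ≤ (2*r) ^ N :=
        Real.rpow_le_rpow (lt_of_lt_of_le hb htb).le (ht.2.trans (min_le_left _ _)) hN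
      have h2 : S t ≤ S r := hS_anti r t hbr ht.1.le
      exact mul_le_mul h1 h2 (hS_nonneg t htb) (Real.rpow_nonneg (by linarith) N)
    have hrS : r ^ (N+1) * S r ≤ C₃ := by
      have h1 : S r ≤ C₃ * r ^ (-(1+N)) := hS_le r hbr
      have h2 : r ^ (N+1) * r ^ (-(1+N)) = 1 := by
        rw [← Real.rpow_add hr0, show (N+1) + (-(1+N)) = 0 by ring, Real.rpow_zero]
      calc r ^ (N+1) * S r ≤ r ^ (N+1) * (C₃ * r ^ (-(1+N))) :=
            mul_le_mul_of_nonneg_left h1 (Real.rpow_nonneg hr0.le _)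
        _ = C₃ * (r ^ (N+1) * r ^ (-(1+N))) := by ring
        _ = C₃ := by rw [h2, mul_one]
    have hreal : (2*r) ^ N * S r * (C * (2*r)) ≤ K * C * C₃ := by
      have e1 : (2*r) ^ N = 2 ^ N * r ^ N := Real.mul_rpow (by norm_num) hr0.le
      have e2 : r ^ (N+1) = r ^ N * r := Real.rpow_add_one hr0.ne' N
      have heq : (2*r) ^ N * S r * (C * (2*r)) = K * C * (r ^ (N+1) * S r) := by
        rw [e1, hK2, e2]; ring
      rw [heq]
      exact mul_le_mul_of_nonneg_left hrS (by positivity)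
    calc ∫⁻ t in Ioc r R', G t ∂m.measure
        ≤ ∫⁻ _ in Ioc r R', ENNReal.ofReal ((2*r) ^ N * S r) ∂m.measure :=
          setLIntegral_mono_ae measurable_const.aemeasurable
            (Filter.Eventually.of_forall hb1)
      _ = ENNReal.ofReal ((2*r) ^ N * S r) * m.measure (Ioc r R') := setLIntegral_const _ _
      _ ≤ ENNReal.ofReal ((2*r) ^ N * S r) * ENNReal.ofReal (C * (2*r)) := by
          rw [StieltjesFunction.measure_Ioc]
          apply mul_le_mul_right
          apply ENNReal.ofReal_le_ofReal
          have h1 : m R' ≤ C * R' := hmC R' (le_trans hr0.le hrR')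
          have h2 : C * R' ≤ C * (2*r) := mul_le_mul_of_nonneg_left (min_le_left _ _) hC
          have h3 := hmpos r
          linarith
      _ = ENNReal.ofReal ((2*r) ^ N * S r * (C * (2*r))) := by
          rw [ENNReal.ofReal_mul (mul_nonneg (Real.rpow_nonneg (by linarith) N)
            (hS_nonneg r hbr))]
      _ ≤ ENNReal.ofReal (K * C * C₃) := ENNReal.ofReal_le_ofReal hreal
  -- term 2
  set H : ℝ → ℝ → ENNReal := fun t u => ENNReal.ofReal (K / t) * (Ioc (t/2) t).indicator G u
    with hHdef
  have hA : MeasurableSet {p : ℝ × ℝ | p.1/2 < p.2 ∧ p.2 ≤ p.1} :=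
    (measurableSet_lt (measurable_fst.div_const 2) measurable_snd).inter
      (measurableSet_le measurable_snd measurable_fst)
  have hHmeas : Measurable (Function.uncurry H) := by
    have huncurry : Function.uncurry H = fun p : ℝ × ℝ =>
        ENNReal.ofReal (K / p.1) *
          ({q : ℝ × ℝ | q.1/2 < q.2 ∧ q.2 ≤ q.1}.indicator (fun q => G q.2) p) := by
      funext p
      rw [hHdef]
      simp only [Function.uncurry, Set.indicator_apply, Set.mem_Ioc, Set.mem_setOf_eq]
    rw [huncurry]
    exact ((measurable_const.div measurable_fst).ennreal_ofReal).mul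
      ((hGmeas.comp measurable_snd).indicator hA)
  have hterm2 : ∫⁻ t in Ioc R' R, G t ∂m.measure
      ≤ ENNReal.ofReal (2*K*C) * ∫⁻ u in Ioc r R, G u ∂volume := by
    have h2rt : ∀ t ∈ Ioc R' R, 2*r < t := by
      intro t ht
      rcases min_lt_iff.mp ht.1 with h | h
      · exact h
      · linarith [ht.2]
    have step1 : ∫⁻ t in Ioc R' R, G t ∂m.measure
        ≤ ∫⁻ t in Ioc R' R, ∫⁻ u in Ioc r R, H t u ∂volume ∂m.measure := by
      apply setLIntegral_mono_ae
      · exact (Measurable.lintegral_prod_right hHmeas).aemeasurable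
      refine Filter.Eventually.of_forall fun t ht => ?_
      have h2t : 2*r < t := h2rt t ht
      have ht0 : 0 < t := by linarith
      have htb : b ≤ t := le_trans hbr (by linarith)
      -- lower bound the inner integral
      have hsub : Ioc (t/2) t ⊆ Ioc r R := by
        intro x hx
        exact ⟨by linarith [hx.1], hx.2.trans ht.2⟩
      have hlow : ENNReal.ofReal ((t/2) ^ N * S t) * ENNReal.ofReal (t - t/2)
          ≤ ∫⁻ u in Ioc (t/2) t, G u ∂volume := by
        rw [← Real.volume_Ioc, ← setLIntegral_const]
        apply setLIntegral_mono_ae hGmeas.aemeasurable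
        refine Filter.Eventually.of_forall fun u hu => ?_
        have hub : b ≤ u := hbr.trans (by linarith [hu.1])
        rw [hGdef]; dsimp only; rw [hS'eq u hub]
        apply ENNReal.ofReal_le_ofReal
        exact mul_le_mul (Real.rpow_le_rpow (by linarith) hu.1.le hN)
          (hS_anti u t hub hu.2) (hS_nonneg t htb)
          (Real.rpow_nonneg (by linarith [hu.1]) N)
      have hrealeq : t ^ N * S t = K / t * ((t/2) ^ N * S t * (t - t/2)) := by
        have e1 : ((t/2) : ℝ) ^ N = t ^ N / 2 ^ N := Real.div_rpow ht0.le (by norm_num) N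
        have h2N : (0:ℝ) < 2 ^ N := Real.rpow_pos_of_pos two_pos N
        rw [e1, hK2]
        field_simp
        ring
      have hGt : G t = ENNReal.ofReal (t ^ N * S t) := by
        rw [hGdef]; dsimp only; rw [hS'eq t htb]
      have hindint : ∫⁻ u in Ioc (t/2) t, G u ∂volume
          = ∫⁻ u in Ioc r R, (Ioc (t/2) t).indicator G u ∂volume := by
        rw [lintegral_indicator measurableSet_Ioc, Measure.restrict_restrict measurableSet_Ioc,
          Set.inter_eq_left.mpr hsub]
      calc G t = ENNReal.ofReal (t ^ N * S t) := hGt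
        _ = ENNReal.ofReal (K / t * ((t/2) ^ N * S t * (t - t/2))) := by rw [← hrealeq]
        _ = ENNReal.ofReal (K / t) * ENNReal.ofReal ((t/2) ^ N * S t * (t - t/2)) :=
            ENNReal.ofReal_mul (by positivity)
        _ = ENNReal.ofReal (K / t) *
            (ENNReal.ofReal ((t/2) ^ N * S t) * ENNReal.ofReal (t - t/2)) := by
            rw [← ENNReal.ofReal_mul (mul_nonneg (Real.rpow_nonneg (by linarith) N)
              (hS_nonneg t htb))]
        _ ≤ ENNReal.ofReal (K / t) * ∫⁻ u in Ioc (t/2) t, G u ∂volume :=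
            mul_le_mul_right hlow _
        _ = ENNReal.ofReal (K / t) * ∫⁻ u in Ioc r R, (Ioc (t/2) t).indicator G u ∂volume := by
            rw [hindint]
        _ = ∫⁻ u in Ioc r R, H t u ∂volume := by
            rw [hHdef]
            exact (lintegral_const_mul' _ _ ENNReal.ofReal_ne_top).symm
    have hswap : ∫⁻ t in Ioc R' R, ∫⁻ u in Ioc r R, H t u ∂volume ∂m.measure
        = ∫⁻ u in Ioc r R, ∫⁻ t in Ioc R' R, H t u ∂m.measure ∂volume :=
      lintegral_lintegral_swap hHmeas.aemeasurable
    have hinner : ∀ u ∈ Ioc r R,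
        ∫⁻ t in Ioc R' R, H t u ∂m.measure ≤ ENNReal.ofReal (2*K*C) * G u := by
      intro u hu
      have hu0 : 0 < u := lt_trans hr0 hu.1
      have hptwise : ∀ t : ℝ,
          H t u ≤ (Ico u (2*u)).indicator (fun _ => ENNReal.ofReal (K/u) * G u) t := by
        intro t
        by_cases htu : u ∈ Ioc (t/2) t
        · have ht1 : t ∈ Ico u (2*u) := ⟨htu.2, by linarith [htu.1]⟩
          rw [Set.indicator_of_mem ht1, hHdef]
          dsimp only
          rw [Set.indicator_of_mem htu]
          apply mul_le_mul_left
          apply ENNReal.ofReal_le_ofReal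
          exact div_le_div_of_nonneg_left hK0.le hu0 htu.2
        · rw [hHdef]; dsimp only
          rw [Set.indicator_of_notMem htu, mul_zero]
          exact bot_le
      calc ∫⁻ t in Ioc R' R, H t u ∂m.measure
          ≤ ∫⁻ t in Ioc R' R,
              (Ico u (2*u)).indicator (fun _ => ENNReal.ofReal (K/u) * G u) t ∂m.measure :=
            lintegral_mono hptwise
        _ = ENNReal.ofReal (K/u) * G u * m.measure (Ico u (2*u) ∩ Ioc R' R) := by
            rw [lintegral_indicator measurableSet_Ico,
              Measure.restrict_restrict measurableSet_Ico, setLIntegral_const]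
        _ ≤ ENNReal.ofReal (K/u) * G u * m.measure (Ioc (u/2) (2*u)) := by
            apply mul_le_mul_right
            apply measure_mono
            intro x hx
            exact ⟨by linarith [hx.1.1], hx.1.2.le⟩
        _ ≤ ENNReal.ofReal (K/u) * G u * ENNReal.ofReal (C * (2*u)) := by
            apply mul_le_mul_right
            rw [StieltjesFunction.measure_Ioc]
            apply ENNReal.ofReal_le_ofReal
            have h1 : m (2*u) ≤ C * (2*u) := hmC (2*u) (by linarith)
            have h2 := hmpos (u/2)
            linarith
        _ = ENNReal.ofReal (2*K*C) * G u := by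
            rw [mul_comm (ENNReal.ofReal (K/u) * G u), ← mul_assoc,
              ← ENNReal.ofReal_mul (by positivity)]
            congr 2
            field_simp
    calc ∫⁻ t in Ioc R' R, G t ∂m.measure
        ≤ ∫⁻ t in Ioc R' R, ∫⁻ u in Ioc r R, H t u ∂volume ∂m.measure := step1
      _ = ∫⁻ u in Ioc r R, ∫⁻ t in Ioc R' R, H t u ∂m.measure ∂volume := hswap
      _ ≤ ∫⁻ u in Ioc r R, ENNReal.ofReal (2*K*C) * G u ∂volume :=
          setLIntegral_mono_ae (measurable_const.mul hGmeas).aemeasurable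
            (Filter.Eventually.of_forall hinner)
      _ = ENNReal.ofReal (2*K*C) * ∫⁻ u in Ioc r R, G u ∂volume :=
          lintegral_const_mul' _ _ ENNReal.ofReal_ne_top
  -- put everything together
  have htot : ∫⁻ t in Ioc r R, ENNReal.ofReal (Q t / t ^ 2) ∂m.measure
      ≤ ENNReal.ofReal (K*C*C₃ + 2*K*C*I) := by
    calc ∫⁻ t in Ioc r R, ENNReal.ofReal (Q t / t ^ 2) ∂m.measure
        ≤ ∫⁻ t in Ioc r R, G t ∂m.measure := hmono
      _ = (∫⁻ t in Ioc r R', G t ∂m.measure) + ∫⁻ t in Ioc R' R, G t ∂m.measure := hsplit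
      _ ≤ ENNReal.ofReal (K*C*C₃) + ENNReal.ofReal (2*K*C) * ENNReal.ofReal I := by
          refine add_le_add hterm1 (hterm2.trans ?_)
          rw [hGI]
      _ = ENNReal.ofReal (K*C*C₃ + 2*K*C*I) := by
          rw [← ENNReal.ofReal_mul (by positivity),
            ← ENNReal.ofReal_add (by positivity) (by positivity)]
  have hIeq : (∫ t in r..R, t ^ N * ⨆ s : {s : ℝ // t ≤ s}, Q s.1 / (s.1 : ℝ) ^ ((2:ℝ) + N)) = I := by
    rw [hIdef, intervalIntegral.integral_of_le hrR.le]
  rw [hLHS, hIeq]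
  have hfin : (∫⁻ t in Ioc r R, ENNReal.ofReal (Q t / t ^ 2) ∂m.measure).toReal
      ≤ K*C*C₃ + 2*K*C*I := by
    apply ENNReal.toReal_le_of_le_ofReal (by positivity) htot
  refine hfin.trans ?_
  nlinarith [mul_nonneg (mul_nonneg hK0.le hC) hC₃, hI0, hK0.le, hC, hC₃,
    mul_nonneg (mul_nonneg (mul_nonneg hK0.le hC) hC₃) hI0,
    mul_nonneg (mul_nonneg hK0.le hC) hI0]
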